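/- Let M be a monoidal category with direct limits indexed by ℕ. If ((X_i), (ξ_i^j)) is a direct system in M where each X_i is a coalgebra and each transition map ξ_i^j : X_i → X_j is a coalgebra homomorphism, then the colimit X = colim X_i carries a unique coalgebra structure (Δ, ε) such that each structural morphism ξ_i : X_i → X is a coalgebra homomorphism, and with this structure X is the colimit of the direct system in the category of coalgebras in M. -/

import Mathlib

open CategoryTheory CategoryTheory.Limits MonoidalCategory

universe v u

variable {M : Type u} [Category.{v} M] [MonoidalCategory M]

section Aux

variable {A B C D E : M}

lemma aux_whiskerR (f : A ⟶ B) (g : C ⟶ D) (u : B ⟶ E) :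
    (f ⊗ₘ g) ≫ (u ▷ D) = (f ≫ u) ⊗ₘ g := by
  rw [← tensorHom_id, tensorHom_comp_tensorHom, Category.comp_id]

lemma aux_whiskerL (f : A ⟶ B) (g : C ⟶ D) (u : D ⟶ E) :
    (f ⊗ₘ g) ≫ (B ◁ u) = f ⊗ₘ (g ≫ u) := by
  rw [← id_tensorHom, tensorHom_comp_tensorHom, Category.comp_id]

lemma aux_tensor_left (f : A ⟶ B) (g : C ⟶ D) :
    f ⊗ₘ g = (f ▷ C) ≫ (B ◁ g) := tensorHom_def f g

end Aux

/-- If `((X_i), (ξ_i^j))` is an ℕ-indexed direct system of coalgebras in a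
monoidal category `M` with coalgebra homomorphisms as transition maps, then the colimit
carries a unique coalgebra structure making the structural morphisms coalgebra homomorphisms,
and with this structure it is the colimit in the category of coalgebras in `M`. -/
theorem stmt1 (X : ℕ ⥤ M) [HasColimit X]
    (Δ : ∀ i : ℕ, X.obj i ⟶ X.obj i ⊗ X.obj i) (ε : ∀ i : ℕ, X.obj i ⟶ 𝟙_ M)
    (hco : ∀ i, Δ i ≫ (Δ i ▷ X.obj i) ≫ (α_ _ _ _).hom = Δ i ≫ (X.obj i ◁ Δ i))
    (hl : ∀ i, Δ i ≫ (ε i ▷ X.obj i) = (λ_ (X.obj i)).inv)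
    (hr : ∀ i, Δ i ≫ (X.obj i ◁ ε i) = (ρ_ (X.obj i)).inv)
    (htΔ : ∀ {i j : ℕ} (h : i ⟶ j), X.map h ≫ Δ j = Δ i ≫ (X.map h ⊗ₘ X.map h))
    (htε : ∀ {i j : ℕ} (h : i ⟶ j), X.map h ≫ ε j = ε i) :
    -- existence and uniqueness of the coalgebra structure on the colimit making the
    -- structural morphisms coalgebra homomorphisms
    (∃! DE : (colimit X ⟶ colimit X ⊗ colimit X) × (colimit X ⟶ 𝟙_ M),
      ∀ i : ℕ, colimit.ι X i ≫ DE.1 = Δ i ≫ (colimit.ι X i ⊗ₘ colimit.ι X i) ∧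
        colimit.ι X i ≫ DE.2 = ε i) ∧
    -- this structure is a coalgebra structure and makes the colimit the colimit of the
    -- direct system in the category of coalgebras in `M`
    (∀ (Δc : colimit X ⟶ colimit X ⊗ colimit X) (εc : colimit X ⟶ 𝟙_ M),
      (∀ i : ℕ, colimit.ι X i ≫ Δc = Δ i ≫ (colimit.ι X i ⊗ₘ colimit.ι X i)) →
      (∀ i : ℕ, colimit.ι X i ≫ εc = ε i) →
      (Δc ≫ (Δc ▷ colimit X) ≫ (α_ _ _ _).hom = Δc ≫ (colimit X ◁ Δc)) ∧
      (Δc ≫ (εc ▷ colimit X) = (λ_ (colimit X)).inv) ∧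
      (Δc ≫ (colimit X ◁ εc) = (ρ_ (colimit X)).inv) ∧
      ∀ (C : M) (ΔC : C ⟶ C ⊗ C) (εC : C ⟶ 𝟙_ M),
        (ΔC ≫ (ΔC ▷ C) ≫ (α_ _ _ _).hom = ΔC ≫ (C ◁ ΔC)) →
        (ΔC ≫ (εC ▷ C) = (λ_ C).inv) → (ΔC ≫ (C ◁ εC) = (ρ_ C).inv) →
        ∀ f : ∀ i : ℕ, X.obj i ⟶ C,
          (∀ i, f i ≫ ΔC = Δ i ≫ (f i ⊗ₘ f i)) → (∀ i, f i ≫ εC = ε i) →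
          (∀ {i j : ℕ} (h : i ⟶ j), X.map h ≫ f j = f i) →
          ∃! g : colimit X ⟶ C,
            (g ≫ ΔC = Δc ≫ (g ⊗ₘ g) ∧ g ≫ εC = εc) ∧
            ∀ i, colimit.ι X i ≫ g = f i) := by
  constructor
  · -- existence and uniqueness of the structure
    refine ⟨⟨colimit.desc X ⟨colimit X ⊗ colimit X,
        { app := fun i => Δ i ≫ (colimit.ι X i ⊗ₘ colimit.ι X i)
          naturality := ?_ }⟩,
      colimit.desc X ⟨𝟙_ M,
        { app := fun i => ε i
          naturality := ?_ }⟩⟩, fun i => ⟨by simp, by simp⟩, ?_⟩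
    · intro i j h
      simp [reassoc_of% (htΔ h), tensorHom_comp_tensorHom]
    · intro i j h
      simp [htε h]
    · rintro ⟨D, E⟩ hDE
      ext : 1
      · exact colimit.hom_ext fun i => by simpa using (hDE i).1
      · exact colimit.hom_ext fun i => by simpa using (hDE i).2
  · intro Δc εc hΔc hεc
    refine ⟨?_, ?_, ?_, ?_⟩
    · apply colimit.hom_ext
      intro i
      calc colimit.ι X i ≫ Δc ≫ (Δc ▷ colimit X) ≫ (α_ _ _ _).hom
          = Δ i ≫ ((Δ i ≫ (colimit.ι X i ⊗ₘ colimit.ι X i)) ⊗ₘ colimit.ι X i)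
              ≫ (α_ _ _ _).hom := by
            have h1 := aux_whiskerR (colimit.ι X i) (colimit.ι X i) Δc
            rw [reassoc_of% (hΔc i), reassoc_of% h1, hΔc i]
        _ = Δ i ≫ (Δ i ▷ X.obj i)
              ≫ ((colimit.ι X i ⊗ₘ colimit.ι X i) ⊗ₘ colimit.ι X i) ≫ (α_ _ _ _).hom := by
            rw [← tensorHom_id]
            have : (Δ i ≫ (colimit.ι X i ⊗ₘ colimit.ι X i)) ⊗ₘ colimit.ι X i
                = (Δ i ⊗ₘ 𝟙 (X.obj i))
                  ≫ ((colimit.ι X i ⊗ₘ colimit.ι X i) ⊗ₘ colimit.ι X i) := by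
              rw [tensorHom_comp_tensorHom, Category.id_comp]
            rw [this]; simp
        _ = (Δ i ≫ (Δ i ▷ X.obj i) ≫ (α_ _ _ _).hom)
              ≫ (colimit.ι X i ⊗ₘ (colimit.ι X i ⊗ₘ colimit.ι X i)) := by
            rw [associator_naturality]; simp
        _ = Δ i ≫ (X.obj i ◁ Δ i)
              ≫ (colimit.ι X i ⊗ₘ (colimit.ι X i ⊗ₘ colimit.ι X i)) := by
            rw [hco i]; simp
        _ = Δ i ≫ (colimit.ι X i ⊗ₘ (Δ i ≫ (colimit.ι X i ⊗ₘ colimit.ι X i))) := by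
            rw [← id_tensorHom]
            have : colimit.ι X i ⊗ₘ (Δ i ≫ (colimit.ι X i ⊗ₘ colimit.ι X i))
                = (𝟙 (X.obj i) ⊗ₘ Δ i)
                  ≫ (colimit.ι X i ⊗ₘ (colimit.ι X i ⊗ₘ colimit.ι X i)) := by
              rw [tensorHom_comp_tensorHom, Category.id_comp]
            rw [this]
        _ = colimit.ι X i ≫ Δc ≫ (colimit X ◁ Δc) := by
            rw [reassoc_of% (hΔc i), aux_whiskerL, hΔc i]
    · apply colimit.hom_ext
      intro i
      rw [reassoc_of% (hΔc i), aux_whiskerR, hεc i, aux_tensor_left,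
        reassoc_of% (hl i), ← leftUnitor_inv_naturality]
    · apply colimit.hom_ext
      intro i
      rw [reassoc_of% (hΔc i), aux_whiskerL, hεc i, tensorHom_def',
        reassoc_of% (hr i), ← rightUnitor_inv_naturality]
    · intro C ΔC εC _ _ _ f hfΔ hfε hfnat
      refine ⟨colimit.desc X ⟨C, { app := f, naturality := by intro i j h; simp [hfnat h] }⟩,
        ⟨⟨?_, ?_⟩, fun i => by simp⟩, ?_⟩
      · apply colimit.hom_ext
        intro i
        rw [reassoc_of% (hΔc i)]
        simp [tensorHom_comp_tensorHom, hfΔ i]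
      · apply colimit.hom_ext
        intro i
        simp [hfε i, hεc i]
      · rintro g ⟨-, hg⟩
        exact colimit.hom_ext fun i => by simpa using hg i
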